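/- Consider the linear program: maximize ∑_i w_i(μ_{m,i} y_{m,i} + μ_{s,i} y_{s,i}) over nonnegative variables (x_i, y_{m,i}, y_{s,i}, q_{p,i}, q_{d,i}), subject to ∑_i x_i ≤ 1, ∑_i y_{m,i} ≤ (B−1)∑_i x_i, ∑_i y_{s,i} ≤ B(1 − ∑_i x_i), λ_i − θ_i q_{p,i} = μ_{p,i} x_i for all i, and μ_{p,i} x_i − θ_i q_{d,i} = μ_{m,i} y_{m,i} + μ_{s,i} y_{s,i} for all i. Suppose μ_{m,i} = 1/(D_i τ) and μ_{s,i} = γ/D_i with γτ ≥ (B−1)/B. Then the LP admits an optimal solution with q_{d,i} = 0 for all i. -/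

import Mathlib

set_option maxHeartbeats 1000000

open BigOperators

/-- Feasibility for the steady-state fluid LP. -/
def LPFeasible (I B : ℕ) (lam θ μp μm μs : Fin I → ℝ)
    (x ym ys qp qd : Fin I → ℝ) : Prop :=
  (∀ i, 0 ≤ x i) ∧ (∀ i, 0 ≤ ym i) ∧ (∀ i, 0 ≤ ys i) ∧
  (∀ i, 0 ≤ qp i) ∧ (∀ i, 0 ≤ qd i) ∧
  (∑ i, x i ≤ 1) ∧
  (∑ i, ym i ≤ ((B : ℝ) - 1) * ∑ i, x i) ∧
  (∑ i, ys i ≤ (B : ℝ) * (1 - ∑ i, x i)) ∧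
  (∀ i, lam i - θ i * qp i = μp i * x i) ∧
  (∀ i, μp i * x i - θ i * qd i = μm i * ym i + μs i * ys i)

/-- The ambient space for the LP with decode buffer fixed to zero. -/
abbrev LPE (I : ℕ) := (Fin I → ℝ) × (Fin I → ℝ) × (Fin I → ℝ) × (Fin I → ℝ)

theorem lp_improve
    (I B : ℕ) (hB : 1 ≤ B)
    (lam θ μp μm μs D : Fin I → ℝ) (τ γ : ℝ)
    (hθ : ∀ i, 0 < θ i)
    (hμp : ∀ i, 0 < μp i) (hD : ∀ i, 0 < D i) (hτ : 0 < τ) (hγ : 0 < γ)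
    (hμm : ∀ i, μm i = 1 / (D i * τ)) (hμs : ∀ i, μs i = γ / D i)
    (hcond : γ * τ ≥ ((B : ℝ) - 1) / (B : ℝ))
    (x ym ys qp qd : Fin I → ℝ)
    (hfeas : LPFeasible I B lam θ μp μm μs x ym ys qp qd) :
    ∃ x2 ym2 ys2 qp2 : Fin I → ℝ,
      LPFeasible I B lam θ μp μm μs x2 ym2 ys2 qp2 (fun _ => 0) ∧
      ∀ i, μm i * ym2 i + μs i * ys2 i = μm i * ym i + μs i * ys i := by
  obtain ⟨hx0, hym0, hys0, hqp0, hqd0, hxs, hyms, hyss, hflow1, hflow2⟩ := hfeas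
  have hB0 : (0:ℝ) < (B:ℝ) := by exact_mod_cast Nat.lt_of_lt_of_le Nat.zero_lt_one hB
  have hB1 : (1:ℝ) ≤ (B:ℝ) := by exact_mod_cast hB
  have hγτ : 0 < γ * τ := mul_pos hγ hτ
  have hμm0 : ∀ i, 0 < μm i := fun i => by rw [hμm i]; exact div_pos one_pos (mul_pos (hD i) hτ)
  have hμs0 : ∀ i, 0 < μs i := fun i => by rw [hμs i]; exact div_pos hγ (hD i)
  set ε : Fin I → ℝ := fun i => θ i * qd i / μp i with hεdef
  have hε0 : ∀ i, 0 ≤ ε i := fun i => by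
    have := hqd0 i; have := (hθ i).le; have := (hμp i).le; positivity
  have hεx : ∀ i, ε i ≤ x i := by
    intro i
    have h2 := hflow2 i
    have hth : 0 ≤ μm i * ym i + μs i * ys i := by
      have := (hμm0 i).le; have := (hμs0 i).le; have := hym0 i; have := hys0 i; positivity
    have : ε i = θ i * qd i / μp i := rfl
    rw [this, div_le_iff₀ (hμp i)]
    nlinarith
  set x2 : Fin I → ℝ := fun i => x i - ε i with hx2def
  have hx20 : ∀ i, 0 ≤ x2 i := fun i => sub_nonneg.2 (hεx i)
  set s := ∑ i, x i with hs
  set s' := ∑ i, x2 i with hs'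
  have hs'0 : 0 ≤ s' := Finset.sum_nonneg fun i _ => hx20 i
  have hs's : s' ≤ s := Finset.sum_le_sum fun i _ => sub_le_self _ (hε0 i)
  set S := ∑ i, ym i with hS
  have hS0 : 0 ≤ S := Finset.sum_nonneg fun i _ => hym0 i
  set m := max 0 (S - ((B:ℝ) - 1) * s') with hm
  have hm0 : 0 ≤ m := le_max_left _ _
  have hmS : m ≤ S := by
    have h1 : 0 ≤ ((B:ℝ) - 1) * s' := mul_nonneg (by linarith) hs'0
    rcases max_cases 0 (S - ((B:ℝ) - 1) * s') with ⟨h2, h3⟩ | ⟨h2, h3⟩ <;> rw [hm, h2] <;> linarith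
  set c := if S = 0 then (0:ℝ) else m / S with hc
  have hc0 : 0 ≤ c := by
    rw [hc]; split
    · exact le_refl 0
    · exact div_nonneg hm0 hS0
  have hc1 : c ≤ 1 := by
    rw [hc]; split
    · exact zero_le_one
    · rename_i h
      exact div_le_one_of_le₀ hmS hS0
  have hcS : c * S = m := by
    rw [hc]; split
    · rename_i h; rw [h] at hmS ⊢; linarith
    · rename_i h; field_simp
  have hkey : ∀ i, μs i / (γ * τ) = μm i := by
    intro i
    rw [hμm i, hμs i]
    have := (hD i).ne'
    field_simp
  set ym2 : Fin I → ℝ := fun i => (1 - c) * ym i with hym2def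
  set ys2 : Fin I → ℝ := fun i => ys i + c * ym i / (γ * τ) with hys2def
  have hthr : ∀ i, μm i * ym2 i + μs i * ys2 i = μm i * ym i + μs i * ys i := by
    intro i
    have h1 : μm i * ym2 i + μs i * ys2 i
        = μm i * ym i + μs i * ys i + (μs i / (γ * τ) - μm i) * (c * ym i) := by
      show μm i * ((1 - c) * ym i) + μs i * (ys i + c * ym i / (γ * τ)) = _
      field_simp
      ring
    rw [h1, hkey i]
    ring
  refine ⟨x2, ym2, ys2, fun i => qp i + qd i, ⟨hx20,
    fun i => mul_nonneg (by linarith) (hym0 i),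
    fun i => by
      have : 0 ≤ c * ym i / (γ * τ) := by
        have := hym0 i; positivity
      have := hys0 i
      show 0 ≤ ys i + c * ym i / (γ * τ); linarith,
    fun i => add_nonneg (hqp0 i) (hqd0 i),
    fun i => le_refl 0,
    by linarith,
    ?_, ?_, ?_, ?_⟩, hthr⟩
  · -- ∑ ym2 ≤ (B-1) s'
    have hsum : ∑ i, ym2 i = (1 - c) * S := by
      rw [hS, Finset.mul_sum]
    rw [hsum]
    have h1 : 0 ≤ ((B:ℝ) - 1) * s' := mul_nonneg (by linarith) hs'0
    rcases max_cases 0 (S - ((B:ℝ) - 1) * s') with ⟨h2, h3⟩ | ⟨h2, h3⟩ <;>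
      rw [hm, h2] at hcS <;> nlinarith
  · -- ∑ ys2 ≤ B (1 - s')
    have hsum : ∑ i, ys2 i = (∑ i, ys i) + m / (γ * τ) := by
      have : ∑ i, ys2 i = (∑ i, ys i) + ∑ i, c * ym i / (γ * τ) := by
        rw [← Finset.sum_add_distrib]
      rw [this]
      congr 1
      rw [← hcS, hS, Finset.mul_sum, Finset.sum_div]
    rw [hsum]
    rcases eq_or_lt_of_le hm0 with hm' | hm'
    · rw [← hm']
      have : (B:ℝ) * (1 - s) ≤ (B:ℝ) * (1 - s') := by nlinarith
      simpa using le_trans hyss this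
    · have ht : m = S - ((B:ℝ) - 1) * s' := by
        rcases max_cases 0 (S - ((B:ℝ) - 1) * s') with ⟨h2, h3⟩ | ⟨h2, h3⟩
        · rw [hm, h2] at hm'; linarith
        · rw [hm, h2]
      have hmle : m ≤ ((B:ℝ) - 1) * (s - s') := by
        rw [ht]; nlinarith [hyms]
      have hBγτ : (B:ℝ) - 1 ≤ (B:ℝ) * (γ * τ) := by
        rw [ge_iff_le, div_le_iff₀ hB0] at hcond
        nlinarith
      have : m / (γ * τ) ≤ (B:ℝ) * (s - s') := by
        rw [div_le_iff₀ hγτ]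
        nlinarith
      nlinarith [hyss]
  · intro i
    have h1 : μp i * x2 i = μp i * x i - θ i * qd i := by
      show μp i * (x i - θ i * qd i / μp i) = _
      have hne := (hμp i).ne'
      field_simp
    have := hflow1 i
    rw [h1]; ring_nf; linarith
  · intro i
    have h1 : μp i * x2 i = μp i * x i - θ i * qd i := by
      show μp i * (x i - θ i * qd i / μp i) = _
      have hne := (hμp i).ne'
      field_simp
    rw [hthr i, ← hflow2 i, h1]
    ring

/-- The zero-decode-buffer feasible set is closed. -/
theorem lp_zero_closed (I B : ℕ) (lam θ μp μm μs : Fin I → ℝ) :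
    IsClosed {p : LPE I |
      LPFeasible I B lam θ μp μm μs p.1 p.2.1 p.2.2.1 p.2.2.2 (fun _ => 0)} := by
  have h1 : IsClosed {p : LPE I | ∀ i, 0 ≤ p.1 i} := by
    have : {p : LPE I | ∀ i, 0 ≤ p.1 i} = ⋂ i, {p : LPE I | 0 ≤ p.1 i} := by ext p; simp
    rw [this]
    exact isClosed_iInter fun i => isClosed_le (by fun_prop) (by fun_prop)
  have h2 : IsClosed {p : LPE I | ∀ i, 0 ≤ p.2.1 i} := by
    have : {p : LPE I | ∀ i, 0 ≤ p.2.1 i} = ⋂ i, {p : LPE I | 0 ≤ p.2.1 i} := by ext p; simp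
    rw [this]
    exact isClosed_iInter fun i => isClosed_le (by fun_prop) (by fun_prop)
  have h3 : IsClosed {p : LPE I | ∀ i, 0 ≤ p.2.2.1 i} := by
    have : {p : LPE I | ∀ i, 0 ≤ p.2.2.1 i} = ⋂ i, {p : LPE I | 0 ≤ p.2.2.1 i} := by
      ext p; simp
    rw [this]
    exact isClosed_iInter fun i => isClosed_le (by fun_prop) (by fun_prop)
  have h4 : IsClosed {p : LPE I | ∀ i, 0 ≤ p.2.2.2 i} := by
    have : {p : LPE I | ∀ i, 0 ≤ p.2.2.2 i} = ⋂ i, {p : LPE I | 0 ≤ p.2.2.2 i} := by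
      ext p; simp
    rw [this]
    exact isClosed_iInter fun i => isClosed_le (by fun_prop) (by fun_prop)
  have h5 : IsClosed {p : LPE I | ∀ i : Fin I, (0:ℝ) ≤ (fun _ : Fin I => (0:ℝ)) i} := by
    have : {p : LPE I | ∀ i : Fin I, (0:ℝ) ≤ (fun _ : Fin I => (0:ℝ)) i} = Set.univ := by
      ext p; simp
    rw [this]; exact isClosed_univ
  have h6 : IsClosed {p : LPE I | ∑ i, p.1 i ≤ 1} :=
    isClosed_le (by fun_prop) (by fun_prop)
  have h7 : IsClosed {p : LPE I | ∑ i, p.2.1 i ≤ ((B:ℝ) - 1) * ∑ i, p.1 i} :=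
    isClosed_le (by fun_prop) (by fun_prop)
  have h8 : IsClosed {p : LPE I | ∑ i, p.2.2.1 i ≤ (B:ℝ) * (1 - ∑ i, p.1 i)} :=
    isClosed_le (by fun_prop) (by fun_prop)
  have h9 : IsClosed {p : LPE I | ∀ i, lam i - θ i * p.2.2.2 i = μp i * p.1 i} := by
    have : {p : LPE I | ∀ i, lam i - θ i * p.2.2.2 i = μp i * p.1 i}
        = ⋂ i, {p : LPE I | lam i - θ i * p.2.2.2 i = μp i * p.1 i} := by ext p; simp
    rw [this]
    exact isClosed_iInter fun i => isClosed_eq (by fun_prop) (by fun_prop)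
  have h10 : IsClosed {p : LPE I | ∀ i,
      μp i * p.1 i - θ i * (fun _ : Fin I => (0:ℝ)) i = μm i * p.2.1 i + μs i * p.2.2.1 i} := by
    have : {p : LPE I | ∀ i,
        μp i * p.1 i - θ i * (fun _ : Fin I => (0:ℝ)) i = μm i * p.2.1 i + μs i * p.2.2.1 i}
        = ⋂ i, {p : LPE I | μp i * p.1 i - θ i * 0 = μm i * p.2.1 i + μs i * p.2.2.1 i} := by
      ext p; simp
    rw [this]
    exact isClosed_iInter fun i => isClosed_eq (by fun_prop) (by fun_prop)
  exact h1.inter (h2.inter (h3.inter (h4.inter (h5.inter (h6.inter (h7.inter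
    (h8.inter (h9.inter h10))))))))

/-- under `γτ ≥ (B−1)/B`, the steady-state fluid LP admits an optimal
solution with empty decode buffer, `q_{d,i} = 0` for all `i`. -/
theorem lp_admits_optimal_with_zero_decode_buffer
    (I B : ℕ) (hB : 1 ≤ B)
    (w lam θ μp μm μs D : Fin I → ℝ) (τ γ : ℝ)
    (hw : ∀ i, 0 < w i) (hlam : ∀ i, 0 < lam i) (hθ : ∀ i, 0 < θ i)
    (hμp : ∀ i, 0 < μp i) (hD : ∀ i, 0 < D i) (hτ : 0 < τ) (hγ : 0 < γ)
    (hμm : ∀ i, μm i = 1 / (D i * τ)) (hμs : ∀ i, μs i = γ / D i)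
    (hcond : γ * τ ≥ ((B : ℝ) - 1) / (B : ℝ)) :
    ∃ x ym ys qp qd : Fin I → ℝ,
      LPFeasible I B lam θ μp μm μs x ym ys qp qd ∧
      (∀ i, qd i = 0) ∧
      ∀ x' ym' ys' qp' qd' : Fin I → ℝ,
        LPFeasible I B lam θ μp μm μs x' ym' ys' qp' qd' →
          ∑ i, w i * (μm i * ym' i + μs i * ys' i) ≤
            ∑ i, w i * (μm i * ym i + μs i * ys i) := by
  classical
  have hB0 : (0:ℝ) < (B:ℝ) := by exact_mod_cast Nat.lt_of_lt_of_le Nat.zero_lt_one hB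
  have hB1 : (1:ℝ) ≤ (B:ℝ) := by exact_mod_cast hB
  set K : Set (LPE I) := {p : LPE I |
      LPFeasible I B lam θ μp μm μs p.1 p.2.1 p.2.2.1 p.2.2.2 (fun _ => 0)} with hKdef
  -- K is nonempty
  have hne : K.Nonempty := by
    refine ⟨(fun _ => 0, fun _ => 0, fun _ => 0, fun i => lam i / θ i), ?_⟩
    refine ⟨fun i => le_refl 0, fun i => le_refl 0, fun i => le_refl 0,
      fun i => div_nonneg (hlam i).le (hθ i).le, fun i => le_refl 0, ?_, ?_, ?_, ?_, ?_⟩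
    · simp
    · simp
    · simp [hB0.le]
    · intro i
      have := (hθ i).ne'
      show lam i - θ i * (lam i / θ i) = μp i * 0
      field_simp
      ring
    · intro i
      show μp i * 0 - θ i * 0 = μm i * 0 + μs i * 0
      ring
  -- K is contained in a compact box
  have hsub : K ⊆ Set.Icc
      ((fun _ => 0, fun _ => 0, fun _ => 0, fun _ => 0) : LPE I)
      ((fun _ => 1, fun _ => (B:ℝ), fun _ => (B:ℝ), fun i => lam i / θ i) : LPE I) := by
    rintro ⟨x, ym, ys, qp⟩ hp
    obtain ⟨hx0, hym0, hys0, hqp0, -, hxs, hyms, hyss, hflow1, -⟩ := hp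
    have hxs0 : (0:ℝ) ≤ ∑ i, x i := Finset.sum_nonneg fun i _ => hx0 i
    constructor
    · exact ⟨hx0, hym0, hys0, hqp0⟩
    · refine ⟨?_, ?_, ?_, ?_⟩
      · intro i
        have hle : x i ≤ ∑ j, x j :=
          Finset.single_le_sum (fun j _ => hx0 j) (Finset.mem_univ i)
        show x i ≤ 1
        linarith
      · intro i
        have hle : ym i ≤ ∑ j, ym j :=
          Finset.single_le_sum (fun j _ => hym0 j) (Finset.mem_univ i)
        show ym i ≤ (B:ℝ)
        nlinarith
      · intro i
        have hle : ys i ≤ ∑ j, ys j :=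
          Finset.single_le_sum (fun j _ => hys0 j) (Finset.mem_univ i)
        show ys i ≤ (B:ℝ)
        nlinarith
      · intro i
        have h1 := hflow1 i
        have h2 : 0 ≤ μp i * x i := mul_nonneg (hμp i).le (hx0 i)
        show qp i ≤ lam i / θ i
        rw [le_div_iff₀ (hθ i)]
        nlinarith
  -- hence K is compact
  have hKcomp : IsCompact K :=
    IsCompact.of_isClosed_subset isCompact_Icc
      (hKdef ▸ lp_zero_closed I B lam θ μp μm μs) hsub
  -- the objective is continuous
  have hcont : ContinuousOn
      (fun p : LPE I => ∑ i, w i * (μm i * p.2.1 i + μs i * p.2.2.1 i)) K :=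
    Continuous.continuousOn (by fun_prop)
  obtain ⟨p, hpK, hpmax⟩ := hKcomp.exists_isMaxOn hne hcont
  refine ⟨p.1, p.2.1, p.2.2.1, p.2.2.2, fun _ => 0, hpK, fun i => rfl, ?_⟩
  intro x' ym' ys' qp' qd' hfeas'
  obtain ⟨x2, ym2, ys2, qp2, hfeas2, hthr⟩ :=
    lp_improve I B hB lam θ μp μm μs D τ γ hθ hμp hD hτ hγ hμm hμs hcond
      x' ym' ys' qp' qd' hfeas'
  have hmem : ((x2, ym2, ys2, qp2) : LPE I) ∈ K := hfeas2
  have hle := hpmax hmem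
  calc ∑ i, w i * (μm i * ym' i + μs i * ys' i)
      = ∑ i, w i * (μm i * ym2 i + μs i * ys2 i) := by
        refine Finset.sum_congr rfl fun i _ => ?_
        rw [hthr i]
    _ ≤ ∑ i, w i * (μm i * p.2.1 i + μs i * p.2.2.1 i) := hle
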